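/- Let (X,d) be a distance space, p ≠ 0 a real number and σ > 0 with 2σ ≤ 2^(1/p), and suppose d satisfies the power triangle inequality with parameters (p,σ). Then for every sequence (x_n) in X and every x ∈ X, (x_n) converges to x with respect to the induced topology (i.e. for every d-open set U containing x there exists N such that x_n ∈ U for all n ≥ N) if and only if for every ε > 0 there exists N such that d(x_n, x) < ε for all n ≥ N. -/

import Mathlib

/-- A distance function: non-negative, nondegenerate, symmetric. -/
def IsDistance {X : Type*} (d : X → X → ℝ) : Prop :=
  (∀ x y, 0 ≤ d x y) ∧ (∀ x y, d x y = 0 ↔ x = y) ∧ (∀ x y, d x y = d y x)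

/-- The open ball centered at `x` with radius `r` in a distance space. -/
def dball {X : Type*} (d : X → X → ℝ) (x : X) (r : ℝ) : Set X := {y | d x y < r}

/-- A set is `d`-open if every point has an open ball around it inside the set. -/
def IsDOpen {X : Type*} (d : X → X → ℝ) (U : Set X) : Prop :=
  ∀ x ∈ U, ∃ r : ℝ, 0 < r ∧ dball d x r ⊆ U

/-- `d` satisfies the power triangle inequality with parameters `(p, σ)`,
where `^` denotes real (rpow) exponentiation. -/
def PowerTriangleIneq {X : Type*} (d : X → X → ℝ) (p σ : ℝ) : Prop :=
  ∀ x y z : X,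
    d x y ≤ 2 * σ * ((1 / 2) * d x z ^ p + (1 / 2) * d z y ^ p) ^ (1 / p)

/-- Convergence of a sequence in a distance space. -/
def DConvergesTo {X : Type*} (d : X → X → ℝ) (x : ℕ → X) (L : X) : Prop :=
  ∀ ε : ℝ, 0 < ε → ∃ N : ℕ, ∀ n ≥ N, d (x n) L < ε

lemma aux_step {X : Type*} (d : X → X → ℝ) (hd : IsDistance d)
    (p σ : ℝ) (hp : p ≠ 0) (hσ : 0 < σ) (hσp : 2 * σ ≤ 2 ^ (1 / p))
    (hpt : PowerTriangleIneq d p σ) (x y : X) (ε : ℝ) (hε : 0 < ε)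
    (hxy : d x y < ε) :
    ∃ r : ℝ, 0 < r ∧ ∀ z, d y z < r → d x z < ε := by
  obtain ⟨hnn, hzero, hsym⟩ := hd
  by_cases hxey : x = y
  · subst hxey
    exact ⟨ε, hε, fun z hz => hz⟩
  · have ha : 0 < d x y := lt_of_le_of_ne (hnn x y) (fun h => hxey ((hzero x y).1 h.symm))
    set a := d x y with ha_def
    -- common estimate: for any z, d x z ≤ (a^p + (d y z)^p)^(1/p)
    have key : ∀ z : X, d x z ≤ (a ^ p + d y z ^ p) ^ (1 / p) := by
      intro z
      have h1 := hpt x z y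
      have hs : (0:ℝ) ≤ (1 / 2) * d x y ^ p + (1 / 2) * d y z ^ p := by
        have := Real.rpow_nonneg (hnn x y) p
        have := Real.rpow_nonneg (hnn y z) p
        positivity
      have h2 : 2 * σ * ((1 / 2) * d x y ^ p + (1 / 2) * d y z ^ p) ^ (1 / p)
          ≤ 2 ^ (1/p) * ((1 / 2) * d x y ^ p + (1 / 2) * d y z ^ p) ^ (1 / p) := by
        exact mul_le_mul_of_nonneg_right hσp (Real.rpow_nonneg hs _)
      have h3 : (2:ℝ) ^ (1/p) * ((1 / 2) * d x y ^ p + (1 / 2) * d y z ^ p) ^ (1 / p)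
          = (a ^ p + d y z ^ p) ^ (1 / p) := by
        rw [← Real.mul_rpow (by norm_num) hs]
        rw [ha_def]
        ring_nf
      calc d x z ≤ 2 * σ * ((1 / 2) * d x y ^ p + (1 / 2) * d y z ^ p) ^ (1 / p) := h1
        _ ≤ (a ^ p + d y z ^ p) ^ (1 / p) := by rw [← h3]; exact h2
    rcases lt_or_gt_of_ne hp with hpneg | hppos
    · -- p < 0 : any r = ε works
      refine ⟨ε, hε, fun z hz => ?_⟩
      by_cases hzy : d y z = 0
      · have : z = y := ((hzero y z).1 hzy).symm
        subst this
        exact hxy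
      · have hbz : 0 < d y z := lt_of_le_of_ne (hnn y z) (Ne.symm hzy)
        have h1 : ε ^ p < a ^ p := Real.rpow_lt_rpow_of_neg ha hxy hpneg
        have h2 : ε ^ p < a ^ p + d y z ^ p := by
          have := Real.rpow_pos_of_pos hbz p
          linarith
        have h3 : (a ^ p + d y z ^ p) ^ (1/p) < (ε ^ p) ^ (1/p) :=
          Real.rpow_lt_rpow_of_neg (Real.rpow_pos_of_pos hε p) h2
            (by exact one_div_neg.2 hpneg)
        have h4 : (ε ^ p) ^ (1/p) = ε := by
          rw [← Real.rpow_mul hε.le, mul_one_div, div_self hp, Real.rpow_one]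
        exact lt_of_le_of_lt (key z) (h4 ▸ h3)
    · -- p > 0
      set ε' := (a + ε) / 2 with hε'_def
      have haε' : a < ε' := by simp [hε'_def]; linarith
      have hε'ε : ε' < ε := by simp [hε'_def]; linarith
      have hε'pos : 0 < ε' := lt_trans ha haε'
      have hpow : a ^ p < ε' ^ p := Real.rpow_lt_rpow ha.le haε' hppos
      refine ⟨(ε' ^ p - a ^ p) ^ (1/p), Real.rpow_pos_of_pos (by linarith) _, fun z hz => ?_⟩
      have hrp : ((ε' ^ p - a ^ p) ^ (1/p)) ^ p = ε' ^ p - a ^ p := by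
        rw [← Real.rpow_mul (by linarith), one_div_mul_cancel hp, Real.rpow_one]
      have hb : d y z ^ p ≤ ε' ^ p - a ^ p := by
        calc d y z ^ p ≤ ((ε' ^ p - a ^ p) ^ (1/p)) ^ p :=
              Real.rpow_le_rpow (hnn y z) hz.le hppos.le
          _ = ε' ^ p - a ^ p := hrp
      have h2 : a ^ p + d y z ^ p ≤ ε' ^ p := by linarith
      have h3 : (a ^ p + d y z ^ p) ^ (1/p) ≤ (ε' ^ p) ^ (1/p) := by
        apply Real.rpow_le_rpow _ h2 (by positivity)
        have := Real.rpow_nonneg (hnn x y) p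
        have := Real.rpow_nonneg (hnn y z) p
        positivity
      have h4 : (ε' ^ p) ^ (1/p) = ε' := by
        rw [← Real.rpow_mul hε'pos.le, mul_one_div, div_self hp, Real.rpow_one]
      calc d x z ≤ (a ^ p + d y z ^ p) ^ (1/p) := key z
        _ ≤ ε' := h4 ▸ h3
        _ < ε := hε'ε

/-- If `2σ ≤ 2^(1/p)`, topological convergence in the induced topology coincides
with metric-style convergence. -/
theorem converges_iff {X : Type*} (d : X → X → ℝ) (hd : IsDistance d)
    (p σ : ℝ) (hp : p ≠ 0) (hσ : 0 < σ) (hσp : 2 * σ ≤ 2 ^ (1 / p))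
    (hpt : PowerTriangleIneq d p σ) (xs : ℕ → X) (x : X) :
    (∀ U : Set X, IsDOpen d U → x ∈ U → ∃ N : ℕ, ∀ n ≥ N, xs n ∈ U) ↔
      DConvergesTo d xs x := by
  obtain ⟨hnn, hzero, hsym⟩ := hd
  constructor
  · intro h ε hε
    have hopen : IsDOpen d (dball d x ε) := by
      intro y hy
      obtain ⟨r, hr, hball⟩ := aux_step d ⟨hnn, hzero, hsym⟩ p σ hp hσ hσp hpt x y ε hε hy
      exact ⟨r, hr, fun z hz => hball z hz⟩
    have hx : x ∈ dball d x ε := by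
      show d x x < ε
      rw [(hzero x x).2 rfl]; exact hε
    obtain ⟨N, hN⟩ := h (dball d x ε) hopen hx
    exact ⟨N, fun n hn => by rw [hsym]; exact hN n hn⟩
  · intro h U hU hxU
    obtain ⟨r, hr, hball⟩ := hU x hxU
    obtain ⟨N, hN⟩ := h r hr
    exact ⟨N, fun n hn => hball (by show d x (xs n) < r; rw [hsym]; exact hN n hn)⟩
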